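/- If Γ and Γ' are cyclically equivalent connected graphs free from separating edges, then Γ is 3-edge-connected if and only if Γ' is 3-edge-connected. -/

import Mathlib

structure Multigraph (V E : Type) where
  ends : E → Sym2 V

namespace Multigraph

variable {V E : Type} (G : Multigraph V E)

def adjOn (F : Set E) (v w : V) : Prop := ∃ e ∈ F, G.ends e = s(v, w)

def ConnectedOn (F : Set E) : Prop := ∀ v w : V, Relation.ReflTransGen (G.adjOn F) v w

def Connected : Prop := G.ConnectedOn Set.univ

def Bridgeless : Prop := ∀ e : E, G.ConnectedOn ({e} : Set E)ᶜ

def SameC1 (e f : E) : Prop := e = f ∨ ¬ G.ConnectedOn ({e, f} : Set E)ᶜ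

def IsC1Set (S : Set E) : Prop := ∃ e : E, S = {f | G.SameC1 e f}

def compRel (S : Set E) (v w : V) : Prop := ∃ e ∉ S, G.ends e = s(v, w)

def contract (S : Set E) : Multigraph (Quot (G.compRel S)) {e // e ∈ S} :=
  ⟨fun e => (G.ends e.1).map (Quot.mk (G.compRel S))⟩

noncomputable def degree (v : V) : ℕ :=
  Nat.card {e : E // v ∈ G.ends e ∧ G.ends e ≠ s(v, v)} +
    2 * Nat.card {e : E // G.ends e = s(v, v)}

def IsCycleGraph : Prop :=
  G.Connected ∧ 1 ≤ Nat.card E ∧ Nat.card E = Nat.card V ∧ ∀ v : V, G.degree v = 2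

noncomputable def numComponents : ℕ := Nat.card (Quot (G.compRel (∅ : Set E)))

noncomputable def b1 : ℤ := (Nat.card E : ℤ) - (Nat.card V : ℤ) + (G.numComponents : ℤ)

end Multigraph

/-- A cycle of a multigraph: a closed walk with no repeated edges. -/
structure Multigraph.ClosedTrail {V E : Type} (G : Multigraph V E) where
  n : ℕ
  npos : 0 < n
  vert : Fin (n + 1) → V
  edge : Fin n → E
  closed : vert (Fin.last n) = vert 0
  compat : ∀ i : Fin n, G.ends (edge i) = s(vert i.castSucc, vert i.succ)
  inj : Function.Injective edge

/-- A set of edges is a cycle of the graph if it is the edge-support of a closed trail. -/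
def Multigraph.IsCycle {V E : Type} (G : Multigraph V E) (C : Set E) : Prop :=
  ∃ t : G.ClosedTrail, C = Set.range t.edge

/-- Cyclic equivalence (two-isomorphism): a bijection of the edge sets inducing a
bijection between the cycles of the two graphs. -/
def CycEquiv {V E V' E' : Type} (G : Multigraph V E) (G' : Multigraph V' E') : Prop :=
  ∃ ε : E ≃ E', ∀ C : Set E, G.IsCycle C ↔ G'.IsCycle (ε '' C)

/-- A connected multigraph is 3-edge-connected if it remains connected after removing any
two of its edges. -/
def Multigraph.ThreeEdgeConnected {V E : Type} (G : Multigraph V E) : Prop :=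
  ∀ e f : E, e ≠ f → G.ConnectedOn ({e, f} : Set E)ᶜ



namespace Multigraph

variable {V E : Type} {G : Multigraph V E} {F : Set E}

def IsWalk (F : Set E) : V → List E → List V → V → Prop
  | a, [], vs, b => a = b ∧ vs = []
  | a, e :: es, vs, b => ∃ w vs', vs = w :: vs' ∧ e ∈ F ∧ G.ends e = s(a, w) ∧
      IsWalk F w es vs' b

variable {a b : V}

theorem exists_walk (h : Relation.ReflTransGen (G.adjOn F) a b) :
    ∃ es vs, G.IsWalk F a es vs b := by
  induction h using Relation.ReflTransGen.head_induction_on with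
  | refl => exact ⟨[], [], rfl, rfl⟩
  | head hstep _ ih =>
    obtain ⟨es, vs, hw⟩ := ih
    obtain ⟨e, he, hends⟩ := hstep
    exact ⟨e :: es, _ :: vs, _, vs, rfl, he, hends, hw⟩

theorem walk_mem (h : G.IsWalk F a es vs b) : ∀ e ∈ es, e ∈ F := by
  induction es generalizing a vs with
  | nil => simp
  | cons g es' ih =>
    obtain ⟨w, vs', rfl, hg, hge, h'⟩ := h
    intro e he
    rcases List.mem_cons.1 he with rfl | he
    · exact hg
    · exact ih h' e he

theorem walk_split {e : E} (h : G.IsWalk F a es vs b) (he : e ∈ es) :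
    ∃ x y r rv, G.ends e = s(x, y) ∧ G.IsWalk F y r rv b ∧ (e :: r).Sublist es := by
  induction es generalizing a vs with
  | nil => simp at he
  | cons g es' ih =>
    obtain ⟨w, vs', rfl, hg, hge, h'⟩ := h
    by_cases hgE : e = g
    · subst hgE
      exact ⟨a, w, es', vs', hge, h', List.Sublist.refl _⟩
    · obtain ⟨x, y, r, rv, h1, h2, h3⟩ := ih h' (by
        rcases List.mem_cons.1 he with rfl | he
        · exact absurd rfl hgE
        · exact he)
      exact ⟨x, y, r, rv, h1, h2, h3.cons g⟩

theorem walk_nodup (h : G.IsWalk F a es vs b) :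
    ∃ fs ws, G.IsWalk F a fs ws b ∧ fs.Nodup ∧ fs ⊆ es := by
  induction es generalizing a vs with
  | nil => obtain ⟨rfl, rfl⟩ := h; exact ⟨[], [], ⟨rfl, rfl⟩, List.nodup_nil, fun x hx => hx⟩
  | cons g es' ih =>
    obtain ⟨w, vs', rfl, hg, hge, h'⟩ := h
    obtain ⟨fs', ws', hw', hnd', hsub'⟩ := ih h'
    by_cases hmem : g ∈ fs'
    · obtain ⟨x, y, r, rv, h1, h2, h3⟩ := walk_split hw' hmem
      have hndr : (g :: r).Nodup := h3.nodup hnd'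
      rcases Sym2.eq_iff.1 (h1.symm.trans hge) with ⟨rfl, rfl⟩ | ⟨rfl, rfl⟩
      · -- x = a, y = w : use g :: r
        exact ⟨g :: r, _ :: rv, ⟨_, rv, rfl, hg, hge, h2⟩, hndr,
          fun z hz => by
            rcases List.mem_cons.1 hz with rfl | hz
            · exact List.mem_cons_self
            · exact List.mem_cons_of_mem _ (hsub' (h3.subset (List.mem_cons_of_mem _ hz)))⟩
      · -- x = w, y = a : use r
        exact ⟨r, rv, h2, (List.nodup_cons.1 hndr).2,
          fun z hz => List.mem_cons_of_mem _ (hsub' (h3.subset (List.mem_cons_of_mem _ hz)))⟩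
    · exact ⟨g :: fs', w :: ws', ⟨w, ws', rfl, hg, hge, hw'⟩, List.nodup_cons.2 ⟨hmem, hnd'⟩,
        fun z hz => by
          rcases List.mem_cons.1 hz with rfl | hz
          · exact List.mem_cons_self
          · exact List.mem_cons_of_mem _ (hsub' hz)⟩

theorem walk_length (h : G.IsWalk F a es vs b) : vs.length = es.length := by
  induction es generalizing a vs with
  | nil => obtain ⟨-, rfl⟩ := h; rfl
  | cons g es' ih =>
    obtain ⟨w, vs', rfl, -, -, h'⟩ := h
    simp [ih h']

theorem walk_getLast (h : G.IsWalk F a es vs b) :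
    (a :: vs).getLast (List.cons_ne_nil _ _) = b := by
  induction es generalizing a vs with
  | nil => obtain ⟨rfl, rfl⟩ := h; rfl
  | cons g es' ih =>
    obtain ⟨w, vs', rfl, -, -, h'⟩ := h
    rw [List.getLast_cons (List.cons_ne_nil _ _)]
    exact ih h'

theorem walk_compat (h : G.IsWalk F a es vs b) :
    ∀ (i : ℕ) (hi : i < es.length) (h1 : i < (a :: vs).length) (h2 : i + 1 < (a :: vs).length),
      G.ends (es[i]'hi) = s((a :: vs)[i]'h1, (a :: vs)[i+1]'h2) := by
  induction es generalizing a vs with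
  | nil => simp
  | cons g es' ih =>
    obtain ⟨w, vs', rfl, -, hge, h'⟩ := h
    intro i hi h1 h2
    match i with
    | 0 => simpa using hge
    | j + 1 =>
      simp only [List.getElem_cons_succ]
      exact ih h' j (by simpa using hi) (by simpa using h1) (by simpa using h2)





theorem exists_cycle {e f : E} (hef : e ≠ f) (hcon : G.ConnectedOn ({e, f} : Set E)ᶜ) :
    ∃ C, G.IsCycle C ∧ e ∈ C ∧ f ∉ C := by
  obtain ⟨⟨u, v⟩, huv0⟩ := Quot.exists_rep (G.ends e)
  have huv : G.ends e = s(u, v) := huv0.symm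
  obtain ⟨es0, vs0, hw0⟩ := exists_walk (hcon v u)
  obtain ⟨es, vs, hw, hnd, hsub⟩ := walk_nodup hw0
  have hmemF := walk_mem hw
  have hlen : vs.length = es.length := walk_length hw
  have henotin : e ∉ es := fun hx => (hmemF e hx) (by simp)
  have hfnotin : f ∉ es := fun hx => (hmemF f hx) (by simp)
  have hndL : (e :: es).Nodup := List.nodup_cons.2 ⟨henotin, hnd⟩
  have hML : (u :: v :: vs).length = (e :: es).length + 1 := by simp [hlen]
  refine ⟨{x | x ∈ e :: es},
    ⟨⟨(e :: es).length, by simp,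
      fun i => (u :: v :: vs).get (Fin.cast hML.symm i),
      fun i => (e :: es).get i, ?_, ?_, ?_⟩, ?_⟩, by simp, fun hx => by
        rcases List.mem_cons.1 hx with rfl | hx
        · exact hef rfl
        · exact hfnotin hx⟩
  · -- closed
    have h1 : (u :: v :: vs).getLast (by simp) = u := by
      rw [List.getLast_cons (by simp)]; exact walk_getLast hw
    rw [List.getLast_eq_getElem] at h1
    show (u :: v :: vs).get _ = (u :: v :: vs).get _
    simp only [List.get_eq_getElem]
    convert h1 using 2 <;> simp [hlen]
  · -- compat
    intro i
    simp only [List.get_eq_getElem]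
    match i with
    | ⟨0, h0⟩ => simpa using huv
    | ⟨j + 1, hj⟩ =>
      have hj' : j < es.length := by simpa using hj
      have := walk_compat hw j hj' (by simp; omega) (by simp; omega)
      simp only [List.getElem_cons_succ]
      convert this using 2 <;> simp [Fin.succ, Fin.castSucc, Fin.castAdd, Fin.castLE]
  · -- inj
    exact List.nodup_iff_injective_get.1 hndL
  · -- range = coe
    ext x
    simp only [Set.mem_range, Set.mem_setOf_eq]
    exact List.mem_iff_get


theorem adj_symm {v w : V} (h : G.adjOn F v w) : G.adjOn F w v := by
  obtain ⟨g, hg, hge⟩ := h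
  exact ⟨g, hg, by rwa [Sym2.eq_swap]⟩

theorem rtg_symm {v w : V} (h : Relation.ReflTransGen (G.adjOn F) v w) :
    Relation.ReflTransGen (G.adjOn F) w v :=
  by haveI : Std.Symm (G.adjOn F) := ⟨fun _ _ => adj_symm⟩; exact Std.Symm.symm _ _ h

theorem connected_compl_pair {e f : E} (hbf : G.ConnectedOn ({f} : Set E)ᶜ)
    {C : Set E} (hC : G.IsCycle C) (heC : e ∈ C) (hfC : f ∉ C) :
    G.ConnectedOn ({e, f} : Set E)ᶜ := by
  obtain ⟨t, rfl⟩ := hC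
  obtain ⟨i, hie⟩ := heC
  have hedge : ∀ j : Fin t.n, j ≠ i → t.edge j ∈ ({e, f} : Set E)ᶜ := by
    intro j hj
    simp only [Set.mem_compl_iff, Set.mem_insert_iff, Set.mem_singleton_iff, not_or]
    refine ⟨fun h => hj (t.inj (h.trans hie.symm)), fun h => hfC (h ▸ Set.mem_range_self j)⟩
  have seg : ∀ (d a : ℕ) (h : a + d ≤ t.n), (∀ m, a ≤ m → m < a + d → m ≠ i.val) →
      Relation.ReflTransGen (G.adjOn ({e, f} : Set E)ᶜ)
        (t.vert ⟨a, by omega⟩) (t.vert ⟨a + d, by omega⟩) := by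
    intro d
    induction d with
    | zero => intro a h hm; exact Relation.ReflTransGen.refl
    | succ d ih =>
      intro a h hm
      have ha : a < t.n := by omega
      have hstep : G.adjOn ({e, f} : Set E)ᶜ (t.vert ⟨a, by omega⟩) (t.vert ⟨a + 1, by omega⟩) := by
        refine ⟨t.edge ⟨a, ha⟩, hedge _ (Fin.ne_of_val_ne (hm a le_rfl (by omega))), ?_⟩
        have := t.compat ⟨a, ha⟩
        convert this using 3
        all_goals rfl
      have ihr := ih (a + 1) (by omega) (fun m h1 h2 => hm m (by omega) (by omega))
      have := Relation.ReflTransGen.head hstep ihr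
      convert this using 3
      omega
  have hin : i.val < t.n := i.2
  have w1 : Relation.ReflTransGen (G.adjOn ({e, f} : Set E)ᶜ)
      (t.vert ⟨i.val + 1, by omega⟩) (t.vert ⟨t.n, by omega⟩) := by
    have := seg (t.n - (i.val + 1)) (i.val + 1) (by omega) (fun m h1 h2 => by omega)
    convert this using 3
    omega
  have w2 : Relation.ReflTransGen (G.adjOn ({e, f} : Set E)ᶜ)
      (t.vert ⟨0, by omega⟩) (t.vert ⟨i.val, by omega⟩) := by
    have := seg i.val 0 (by omega) (fun m h1 h2 => by omega)
    convert this using 3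
    omega
  have hcl : t.vert ⟨t.n, by omega⟩ = t.vert ⟨0, by omega⟩ := t.closed
  have detour : Relation.ReflTransGen (G.adjOn ({e, f} : Set E)ᶜ)
      (t.vert i.succ) (t.vert i.castSucc) := by
    have h1 : t.vert i.succ = t.vert ⟨i.val + 1, by omega⟩ := by congr 1
    rw [h1]
    have h2 : t.vert i.castSucc = t.vert ⟨i.val, by omega⟩ := by congr 1
    rw [h2]
    exact (w1.trans (hcl ▸ w2))
  intro v w
  have hvw := hbf v w
  induction hvw with
  | refl => exact Relation.ReflTransGen.refl
  | tail h1 h2 ih =>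
    rename_i c d
    obtain ⟨g, hg, hge⟩ := h2
    by_cases hgE : g = e
    · subst hgE
      have hcompat := t.compat i
      rw [hie] at hcompat
      have heq := hcompat.symm.trans hge
      rcases Sym2.eq_iff.1 heq with ⟨h3, h4⟩ | ⟨h3, h4⟩
      · exact ih.trans (h3 ▸ h4 ▸ rtg_symm detour)
      · exact ih.trans (h3 ▸ h4 ▸ detour)
    · refine ih.trans (Relation.ReflTransGen.single ⟨g, ?_, hge⟩)
      simp only [Set.mem_compl_iff, Set.mem_insert_iff, Set.mem_singleton_iff, not_or]
      exact ⟨hgE, by simpa using hg⟩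


def HasCycPair (G : Multigraph V E) : Prop :=
  ∃ e f : E, e ≠ f ∧ ∀ C : Set E, G.IsCycle C → (e ∈ C ↔ f ∈ C)

theorem not_threeEdgeConnected_iff (hbl : G.Bridgeless) :
    ¬ G.ThreeEdgeConnected ↔ HasCycPair G := by
  constructor
  · intro h
    rw [ThreeEdgeConnected] at h
    push_neg at h
    obtain ⟨e, f, hef, hnc⟩ := h
    refine ⟨e, f, hef, fun C hC => ⟨?_, ?_⟩⟩
    · intro heC; by_contra hfC
      exact hnc (connected_compl_pair (hbl f) hC heC hfC)
    · intro hfC; by_contra heC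
      have := connected_compl_pair (hbl e) hC hfC heC
      rw [Set.pair_comm] at this
      exact hnc this
  · rintro ⟨e, f, hef, hall⟩ h3
    obtain ⟨C, hC, heC, hfC⟩ := exists_cycle hef (h3 e f hef)
    exact hfC ((hall C hC).1 heC)

theorem hasCycPair_transfer {V' E' : Type} {G' : Multigraph V' E'}
    (ε : E ≃ E') (hε : ∀ C : Set E, G.IsCycle C ↔ G'.IsCycle (ε '' C)) :
    HasCycPair G → HasCycPair G' := by
  rintro ⟨e, f, hef, hall⟩
  refine ⟨ε e, ε f, fun hh => hef (ε.injective hh), ?_⟩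
  intro C' hC'
  have himg : ε '' (ε.symm '' C') = C' := by
    rw [Equiv.image_eq_preimage_symm ε.symm, Equiv.symm_symm, Equiv.image_preimage]
  have h1 : G.IsCycle (ε.symm '' C') := by
    have := hε (ε.symm '' C')
    rw [himg] at this
    exact this.2 hC'
  have h2 := hall _ h1
  rw [Equiv.image_eq_preimage_symm ε.symm, Equiv.symm_symm] at h2
  simpa using h2


end Multigraph

/-- If Γ and Γ' are cyclically equivalent finite connected multigraphs
free from separating edges, then Γ is 3-edge-connected if and only if Γ' is. -/
theorem stmt9 {V E V' E' : Type} [Finite V] [Finite E] [Finite V'] [Finite E']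
    (G : Multigraph V E) (G' : Multigraph V' E')
    (hconn : G.Connected) (hbl : G.Bridgeless)
    (hconn' : G'.Connected) (hbl' : G'.Bridgeless)
    (h : CycEquiv G G') :
    G.ThreeEdgeConnected ↔ G'.ThreeEdgeConnected := by
  have key := fun {V E : Type} (G : Multigraph V E) (hbl : G.Bridgeless) =>
    Multigraph.not_threeEdgeConnected_iff (G := G) hbl
  obtain ⟨ε, hε⟩ := h
  have hε' : ∀ C' : Set E', G'.IsCycle C' ↔ G.IsCycle (ε.symm '' C') := by
    intro C'
    have himg : ε '' (ε.symm '' C') = C' := by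
      rw [Equiv.image_eq_preimage_symm ε.symm, Equiv.symm_symm, Equiv.image_preimage]
    have := hε (ε.symm '' C')
    rw [himg] at this
    exact this.symm
  rw [← not_iff_not, key G hbl, key G' hbl']
  exact ⟨Multigraph.hasCycPair_transfer ε hε, Multigraph.hasCycPair_transfer ε.symm hε'⟩
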